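/- Let A, B : [0,∞) → ℝ be differentiable with A(t) > 0 and B(t) > 0, satisfying A'(t) = -4(A(t)/B(t))² and B'(t) = 4·A(t)/B(t) + 8. Then the function ψ(t) := (A(t)/B(t))·(1 + A(t)/B(t)) is strictly decreasing on [0,∞) and ψ(t) → 0 as t → ∞. -/

import Mathlib

open Filter Set

/-- Ricci flow ODE on the universal cover of `SL(2,ℝ)` with `B = C`: the quantity
`ψ = (A/B)(1 + A/B)` is strictly decreasing on `[0,∞)` and tends to `0` as `t → ∞`. -/
theorem sl2_L1_norm_decreasing (A B : ℝ → ℝ)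
    (hA : ∀ t : ℝ, 0 ≤ t → 0 < A t)
    (hB : ∀ t : ℝ, 0 ≤ t → 0 < B t)
    (hA' : ∀ t : ℝ, 0 ≤ t → HasDerivAt A (-4 * (A t / B t) ^ 2) t)
    (hB' : ∀ t : ℝ, 0 ≤ t → HasDerivAt B (4 * (A t / B t) + 8) t) :
    StrictAntiOn (fun t => (A t / B t) * (1 + A t / B t)) (Set.Ici 0) ∧
    Tendsto (fun t => (A t / B t) * (1 + A t / B t)) atTop (nhds 0) := by
  set x : ℝ → ℝ := fun t => A t / B t with hxdef
  have hxpos : ∀ t : ℝ, 0 ≤ t → 0 < x t := fun t ht => div_pos (hA t ht) (hB t ht)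
  -- derivative of x
  have hx' : ∀ t : ℝ, 0 ≤ t → HasDerivAt x (-8 * x t * (x t + 1) / B t) t := by
    intro t ht
    have h := (hA' t ht).div (hB' t ht) (hB t ht).ne'
    refine h.congr_deriv ?_
    have hBne : B t ≠ 0 := (hB t ht).ne'
    simp only [hxdef]
    field_simp
    ring
  have hxneg : ∀ t : ℝ, 0 ≤ t → -8 * x t * (x t + 1) / B t < 0 := by
    intro t ht
    apply div_neg_of_neg_of_pos _ (hB t ht)
    nlinarith [hxpos t ht]
  -- derivative of ψ = x (1 + x)
  have hψ' : ∀ t : ℝ, 0 ≤ t → HasDerivAt (fun t => x t * (1 + x t))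
      ((-8 * x t * (x t + 1) / B t) * (1 + 2 * x t)) t := by
    intro t ht
    have h := (hx' t ht).mul ((hasDerivAt_const t (1 : ℝ)).add (hx' t ht))
    refine h.congr_deriv ?_
    simp only [Pi.add_apply]
    ring
  have hψcont : ContinuousOn (fun t => x t * (1 + x t)) (Ici (0 : ℝ)) :=
    fun t ht => ((hψ' t ht).continuousAt).continuousWithinAt
  have hanti : StrictAntiOn (fun t => x t * (1 + x t)) (Ici (0 : ℝ)) := by
    apply strictAntiOn_of_deriv_neg (convex_Ici 0) hψcont
    intro t ht
    rw [interior_Ici] at ht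
    rw [(hψ' t ht.le).deriv]
    have h1 := hxneg t ht.le
    have h2 := hxpos t ht.le
    nlinarith
  refine ⟨hanti, ?_⟩
  -- x is antitone on [0,∞)
  have hxanti : AntitoneOn x (Ici (0 : ℝ)) := by
    apply antitoneOn_of_deriv_nonpos (convex_Ici 0)
      (fun t ht => ((hx' t ht).continuousAt).continuousWithinAt)
    · intro t ht
      rw [interior_Ici] at ht
      exact ((hx' t ht.le).differentiableAt).differentiableWithinAt
    · intro t ht
      rw [interior_Ici] at ht
      rw [(hx' t ht.le).deriv]
      exact (hxneg t ht.le).le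
  set c : ℝ := 4 * x 0 + 8 with hcdef
  have hx0pos : 0 < x 0 := hxpos 0 le_rfl
  have hcpos : 0 < c := by positivity
  have hB0pos : 0 < B 0 := hB 0 le_rfl
  -- upper bound on B
  have hBle : ∀ t : ℝ, 0 ≤ t → B t ≤ B 0 + c * t := by
    intro t ht
    have hd : ∀ s : ℝ, 0 ≤ s → HasDerivAt (fun t => B t - c * t) (4 * x s + 8 - c) s := by
      intro s hs
      have h2 : HasDerivAt (fun t : ℝ => c * t) c s := by
        simpa using (hasDerivAt_id s).const_mul c
      exact (hB' s hs).sub h2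
    have hg : AntitoneOn (fun t => B t - c * t) (Ici (0 : ℝ)) := by
      apply antitoneOn_of_deriv_nonpos (convex_Ici 0)
      · intro s hs
        exact ((hd s hs).continuousAt).continuousWithinAt
      · intro s hs
        rw [interior_Ici] at hs
        exact ((hd s hs.le).differentiableAt).differentiableWithinAt
      · intro s hs
        rw [interior_Ici] at hs
        rw [(hd s hs.le).deriv]
        have hxs := hxanti (self_mem_Ici) (mem_Ici.2 (le_of_lt hs)) hs.le
        simp only [hcdef]
        linarith
    have := hg self_mem_Ici ht ht
    simp only [mul_zero, sub_zero] at this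
    linarith
  -- claim: for every ε > 0 there is T ≥ 0 with x T < ε
  have claim : ∀ ε : ℝ, 0 < ε → ∃ T : ℝ, 0 ≤ T ∧ x T < ε := by
    intro ε hε
    by_contra hcon
    push_neg at hcon
    have hxge : ∀ t : ℝ, 0 ≤ t → ε ≤ x t := fun t ht => hcon t ht
    -- comparison function g
    have hBct : ∀ t : ℝ, 0 ≤ t → 0 < B 0 + c * t := by
      intro t ht; positivity
    have hg' : ∀ t : ℝ, 0 ≤ t → HasDerivAt
        (fun t => x t + (8 * ε / c) * Real.log (B 0 + c * t))
        (-8 * x t * (x t + 1) / B t + (8 * ε / c) * (c / (B 0 + c * t))) t := by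
      intro t ht
      have hlog : HasDerivAt (fun t => Real.log (B 0 + c * t)) (c / (B 0 + c * t)) t := by
        have h1 : HasDerivAt (fun t : ℝ => B 0 + c * t) c t := by
          simpa using ((hasDerivAt_id t).const_mul c).const_add (B 0)
        simpa using h1.log (hBct t ht).ne'
      exact (hx' t ht).add (hlog.const_mul _)
    have hgneg : ∀ t : ℝ, 0 ≤ t →
        -8 * x t * (x t + 1) / B t + (8 * ε / c) * (c / (B 0 + c * t)) ≤ 0 := by
      intro t ht
      have hBt := hB t ht
      have hBc := hBct t ht
      have hxt := hxge t ht
      have h1 : (8 * ε / c) * (c / (B 0 + c * t)) = 8 * ε / (B 0 + c * t) := by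
        field_simp
      rw [h1]
      have h2 : 8 * ε / (B 0 + c * t) ≤ 8 * (x t * (x t + 1)) / B t := by
        apply div_le_div₀ (by nlinarith [hxge t ht]) _ hBt (hBle t ht)
        nlinarith
      have h3 : -8 * x t * (x t + 1) / B t = -(8 * (x t * (x t + 1)) / B t) := by
        ring
      rw [h3]
      linarith
    have hganti : AntitoneOn (fun t => x t + (8 * ε / c) * Real.log (B 0 + c * t))
        (Ici (0 : ℝ)) := by
      apply antitoneOn_of_deriv_nonpos (convex_Ici 0)
      · exact fun t ht => ((hg' t ht).continuousAt).continuousWithinAt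
      · intro t ht
        rw [interior_Ici] at ht
        exact ((hg' t ht.le).differentiableAt).differentiableWithinAt
      · intro t ht
        rw [interior_Ici] at ht
        rw [(hg' t ht.le).deriv]
        exact hgneg t ht.le
    -- choose T large
    have htend : Tendsto (fun T : ℝ => Real.log (B 0 + c * T)) atTop atTop := by
      apply Real.tendsto_log_atTop.comp
      apply tendsto_atTop_add_const_left
      exact (tendsto_id (α := ℝ)).const_mul_atTop hcpos
    obtain ⟨T, hT⟩ := ((htend.eventually_ge_atTop
      (Real.log (B 0) + c * x 0 / (8 * ε) + 1)).and (eventually_ge_atTop (0 : ℝ))).exists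
    obtain ⟨hTlog, hT0⟩ := hT
    have hgle := hganti self_mem_Ici hT0 hT0
    simp only [mul_zero, add_zero] at hgle
    have hεc : 0 < 8 * ε / c := by positivity
    have key : (8 * ε / c) * (Real.log (B 0 + c * T) - Real.log (B 0)) ≥
        (8 * ε / c) * (c * x 0 / (8 * ε) + 1) := by
      apply mul_le_mul_of_nonneg_left _ hεc.le
      linarith
    have hxT := hxge T hT0
    have hid : (8 * ε / c) * (c * x 0 / (8 * ε)) = x 0 := by
      field_simp
    nlinarith [hxpos T hT0]
  -- x tends to 0
  have hx0 : Tendsto x atTop (nhds 0) := by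
    rw [Metric.tendsto_atTop]
    intro ε hε
    obtain ⟨T, hT0, hTε⟩ := claim ε hε
    refine ⟨T, fun t ht => ?_⟩
    have ht0 : (0 : ℝ) ≤ t := le_trans hT0 ht
    have h1 : x t ≤ x T := hxanti (mem_Ici.2 hT0) (mem_Ici.2 ht0) ht
    have h2 : 0 < x t := hxpos t ht0
    rw [Real.dist_eq, sub_zero, abs_of_pos h2]
    linarith
  have hone : Tendsto (fun _ : ℝ => (1 : ℝ)) atTop (nhds 1) := tendsto_const_nhds
  have h : Tendsto (fun t => x t * (1 + x t)) atTop (nhds (0 * (1 + 0))) :=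
    hx0.mul (hone.add hx0)
  norm_num at h
  exact h
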